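/- arXiv:2012.15457 — 2 statements merged into one kernel-verified Lean document; each statement's English description precedes it below -/
import Mathlib

section
/- Let (X,d) be a compact metric space, f_0,...,f_{m-1} continuous self-maps, φ continuous, and let F(ω,x) = (σω, f_{ω_0}(x)) be the skew product on Σ_m×X with g(ω,x)=φ(x). Then for every n≥1, ε>0 and 0<r<1, Q_n(F,g,ε,r) ≤ K(ε,r)·m^n·Q_n(f_0,...,f_{m-1},φ,ε,r) for some positive constant K(ε,r) depending only on ε and r. -/
open Filter Topology

section FSG

variable {X : Type*}

/-- Apply the maps of the free semigroup action along a word; the first letter of the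
list is applied first. -/
def fw {ι : Type*} (f : ι → X → X) (w : List ι) (x : X) : X :=
  w.foldl (fun y a => f a y) x

/-- The Birkhoff-type sum `(S_w φ)(x) = ∑_{w' ≤ w} φ(f_{w'} x)`. -/
noncomputable def Sw {ι : Type*} (f : ι → X → X) (φ : X → ℝ) (w : List ι) (x : X) : ℝ :=
  ∑ i ∈ Finset.range w.length, φ (fw f (w.take i) x)

variable [MetricSpace X]

/-- `F` is a `(w, ε, r)`-spanning set for the free semigroup action. -/
def rSpan {ι : Type*} (f : ι → X → X) (w : List ι) (ε r : ℝ) (F : Finset X) : Prop :=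
  ∀ x : X, ∃ y ∈ F, (1 - r) * w.length <
    (((Finset.range w.length).filter
      (fun i => dist (fw f (w.take i) x) (fw f (w.take i) y) < ε)).card : ℝ)

/-- `E` is a `(w, ε, r)`-separated set for the free semigroup action. -/
def rSep {ι : Type*} (f : ι → X → X) (w : List ι) (ε r : ℝ) (E : Finset X) : Prop :=
  ∀ x ∈ E, ∀ y ∈ E, x ≠ y → r * w.length <
    (((Finset.range w.length).filter
      (fun i => ε ≤ dist (fw f (w.take i) x) (fw f (w.take i) y))).card : ℝ)

/-- `Q_w(f_0,…,f_{m-1},φ,ε,r)` (spanning-set version). -/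
noncomputable def Qw {ι : Type*} (f : ι → X → X) (φ : X → ℝ) (w : List ι) (ε r : ℝ) : ℝ :=
  sInf {s : ℝ | ∃ F : Finset X, rSpan f w ε r F ∧ s = ∑ x ∈ F, Real.exp (Sw f φ w x)}

/-- `Q_w^s(f_0,…,f_{m-1},φ,ε,r)` (separated-set version). -/
noncomputable def Qws {ι : Type*} (f : ι → X → X) (φ : X → ℝ) (w : List ι) (ε r : ℝ) : ℝ :=
  sSup {s : ℝ | ∃ E : Finset X, rSep f w ε r E ∧ s = ∑ x ∈ E, Real.exp (Sw f φ w x)}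

/-- `Q_n(f_0,…,f_{m-1},φ,ε,r) = (1/m^n) ∑_{|w|=n} Q_w`. -/
noncomputable def Qn {ι : Type*} [Fintype ι] (f : ι → X → X) (φ : X → ℝ)
    (n : ℕ) (ε r : ℝ) : ℝ :=
  (1 / (Fintype.card ι : ℝ) ^ n) * ∑ σ : Fin n → ι, Qw f φ (List.ofFn σ) ε r

/-- `Q_n^s(f_0,…,f_{m-1},φ,ε,r) = (1/m^n) ∑_{|w|=n} Q_w^s`. -/
noncomputable def Qns {ι : Type*} [Fintype ι] (f : ι → X → X) (φ : X → ℝ)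
    (n : ℕ) (ε r : ℝ) : ℝ :=
  (1 / (Fintype.card ι : ℝ) ^ n) * ∑ σ : Fin n → ι, Qws f φ (List.ofFn σ) ε r

/-- The topological `r`-pressure of the free semigroup action (spanning sets);
the limit as `ε → 0` is realised as a supremum over `ε > 0`, the quantity being
monotone in `ε`. -/
noncomputable def Pr {ι : Type*} [Fintype ι] (f : ι → X → X) (φ : X → ℝ) (r : ℝ) : EReal :=
  ⨆ ε ∈ Set.Ioi (0 : ℝ), atTop.limsup fun n : ℕ =>
    (((n : ℝ)⁻¹ * Real.log (Qn f φ n ε r) : ℝ) : EReal)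

/-- `P^s_r(f_0,…,f_{m-1},φ,ε)`, the fixed-`ε` separated-set `r`-pressure. -/
noncomputable def Pse {ι : Type*} [Fintype ι] (f : ι → X → X) (φ : X → ℝ) (ε r : ℝ) : EReal :=
  atTop.limsup fun n : ℕ => (((n : ℝ)⁻¹ * Real.log (Qns f φ n ε r) : ℝ) : EReal)

/-- The topological `r`-pressure of the free semigroup action (separated sets). -/
noncomputable def Ps {ι : Type*} [Fintype ι] (f : ι → X → X) (φ : X → ℝ) (r : ℝ) : EReal :=
  ⨆ ε ∈ Set.Ioi (0 : ℝ), Pse f φ ε r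

/-- Liminf variant of the separated-set topological `r`-pressure. -/
noncomputable def PsInf {ι : Type*} [Fintype ι] (f : ι → X → X) (φ : X → ℝ) (r : ℝ) : EReal :=
  ⨆ ε ∈ Set.Ioi (0 : ℝ), atTop.liminf fun n : ℕ =>
    (((n : ℝ)⁻¹ * Real.log (Qns f φ n ε r) : ℝ) : EReal)

/-- `F` is a `(w, ε)`-spanning set for the Bowen metric `d_w` of the free semigroup action. -/
def span0 {ι : Type*} (f : ι → X → X) (w : List ι) (ε : ℝ) (F : Finset X) : Prop :=
  ∀ x : X, ∃ y ∈ F, ∀ i < w.length,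
    dist (fw f (w.take i) x) (fw f (w.take i) y) ≤ ε

/-- `E` is a `(w, ε)`-separated set for the Bowen metric `d_w`. -/
def sep0 {ι : Type*} (f : ι → X → X) (w : List ι) (ε : ℝ) (E : Finset X) : Prop :=
  ∀ x ∈ E, ∀ y ∈ E, x ≠ y → ∃ i < w.length,
    ε < dist (fw f (w.take i) x) (fw f (w.take i) y)

noncomputable def Qw0 {ι : Type*} (f : ι → X → X) (φ : X → ℝ) (w : List ι) (ε : ℝ) : ℝ :=
  sInf {s : ℝ | ∃ F : Finset X, span0 f w ε F ∧ s = ∑ x ∈ F, Real.exp (Sw f φ w x)}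

noncomputable def Qws0 {ι : Type*} (f : ι → X → X) (φ : X → ℝ) (w : List ι) (ε : ℝ) : ℝ :=
  sSup {s : ℝ | ∃ E : Finset X, sep0 f w ε E ∧ s = ∑ x ∈ E, Real.exp (Sw f φ w x)}

noncomputable def Qn0 {ι : Type*} [Fintype ι] (f : ι → X → X) (φ : X → ℝ) (n : ℕ) (ε : ℝ) : ℝ :=
  (1 / (Fintype.card ι : ℝ) ^ n) * ∑ σ : Fin n → ι, Qw0 f φ (List.ofFn σ) ε

noncomputable def Qns0 {ι : Type*} [Fintype ι] (f : ι → X → X) (φ : X → ℝ) (n : ℕ) (ε : ℝ) : ℝ :=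
  (1 / (Fintype.card ι : ℝ) ^ n) * ∑ σ : Fin n → ι, Qws0 f φ (List.ofFn σ) ε

/-- The topological pressure of the free semigroup action. -/
noncomputable def P0 {ι : Type*} [Fintype ι] (f : ι → X → X) (φ : X → ℝ) : EReal :=
  ⨆ ε ∈ Set.Ioi (0 : ℝ), atTop.limsup fun n : ℕ =>
    (((n : ℝ)⁻¹ * Real.log (Qn0 f φ n ε) : ℝ) : EReal)

/-- `r_w(ε,r)`: the smallest cardinality of a `(w,ε,r)`-spanning set. -/
noncomputable def rSpanCard {ι : Type*} (f : ι → X → X) (w : List ι) (ε r : ℝ) : ℕ :=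
  sInf {k : ℕ | ∃ F : Finset X, rSpan f w ε r F ∧ F.card = k}

/-- The topological `r`-entropy of the free semigroup action. -/
noncomputable def hrEnt {ι : Type*} [Fintype ι] (f : ι → X → X) (r : ℝ) : EReal :=
  ⨆ ε ∈ Set.Ioi (0 : ℝ), atTop.limsup fun n : ℕ =>
    (((n : ℝ)⁻¹ * Real.log ((1 / (Fintype.card ι : ℝ) ^ n) *
      ∑ σ : Fin n → ι, (rSpanCard f (List.ofFn σ) ε r : ℝ)) : ℝ) : EReal)

end FSG

section Skew

open Filter Topology

-- The metric `d'` on `Σ_m = (ℤ → Fin m)`: `d'(ω,ω') = 2^{-k}` with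
-- `k = inf{|n| : ω_n ≠ ω'_n}`.
open Classical in
noncomputable def dSigma (m : ℕ) (ω ω' : ℤ → Fin m) : ℝ :=
  if ω = ω' then 0
  else (1 / 2) ^ (sInf {k : ℕ | ∃ n : ℤ, n.natAbs = k ∧ ω n ≠ ω' n})

/-- The metric `D = max{d', d}` on `Σ_m × X`. -/
noncomputable def Dmet {X : Type*} [MetricSpace X] (m : ℕ)
    (p q : (ℤ → Fin m) × X) : ℝ :=
  max (dSigma m p.1 q.1) (dist p.2 q.2)

/-- The skew product `F(ω,x) = (σω, f_{ω_0}(x))`. -/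
def skew {X : Type*} {m : ℕ} (f : Fin m → X → X) :
    (ℤ → Fin m) × X → (ℤ → Fin m) × X :=
  fun p => (fun n => p.1 (n + 1), f (p.1 0) p.2)

/-- The inverse skew product `F⁻¹(ω,x) = (σ⁻¹ω, f_{ω_{-1}}⁻¹(x))` (for homeomorphisms). -/
def skewInv {X : Type*} [TopologicalSpace X] {m : ℕ} (f : Fin m → X ≃ₜ X) :
    (ℤ → Fin m) × X → (ℤ → Fin m) × X :=
  fun p => (fun n => p.1 (n - 1), (f (p.1 (-1))).symm p.2)

/-- `g(ω,x) = φ(x)`. -/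
def gPot {X : Type*} {m : ℕ} (φ : X → ℝ) : (ℤ → Fin m) × X → ℝ := fun p => φ p.2

/-- `(n,ε,r)`-spanning set for a single map `T` with distance function `ρ`. -/
def rSpanS {Y : Type*} (ρ : Y → Y → ℝ) (T : Y → Y) (n : ℕ) (ε r : ℝ)
    (F : Finset Y) : Prop :=
  ∀ y : Y, ∃ z ∈ F, (1 - r) * n <
    (((Finset.range n).filter (fun i => ρ (T^[i] y) (T^[i] z) < ε)).card : ℝ)

/-- `Q_n(T, g, ε, r)` for a single map. -/
noncomputable def QnS {Y : Type*} (ρ : Y → Y → ℝ) (T : Y → Y) (g : Y → ℝ)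
    (n : ℕ) (ε r : ℝ) : ℝ :=
  sInf {s : ℝ | ∃ F : Finset Y, rSpanS ρ T n ε r F ∧
    s = ∑ z ∈ F, Real.exp (∑ i ∈ Finset.range n, g (T^[i] z))}

/-- `(n,ε)`-spanning set for a single map. -/
def span0S {Y : Type*} (ρ : Y → Y → ℝ) (T : Y → Y) (n : ℕ) (ε : ℝ)
    (F : Finset Y) : Prop :=
  ∀ y : Y, ∃ z ∈ F, ∀ i < n, ρ (T^[i] y) (T^[i] z) ≤ ε

/-- `(n,ε)`-separated set for a single map. -/
def sep0S {Y : Type*} (ρ : Y → Y → ℝ) (T : Y → Y) (n : ℕ) (ε : ℝ)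
    (E : Finset Y) : Prop :=
  ∀ z ∈ E, ∀ z' ∈ E, z ≠ z' → ∃ i < n, ε < ρ (T^[i] z) (T^[i] z')

noncomputable def Qn0S {Y : Type*} (ρ : Y → Y → ℝ) (T : Y → Y) (g : Y → ℝ)
    (n : ℕ) (ε : ℝ) : ℝ :=
  sInf {s : ℝ | ∃ F : Finset Y, span0S ρ T n ε F ∧
    s = ∑ z ∈ F, Real.exp (∑ i ∈ Finset.range n, g (T^[i] z))}

noncomputable def Qns0S {Y : Type*} (ρ : Y → Y → ℝ) (T : Y → Y) (g : Y → ℝ)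
    (n : ℕ) (ε : ℝ) : ℝ :=
  sSup {s : ℝ | ∃ E : Finset Y, sep0S ρ T n ε E ∧
    s = ∑ z ∈ E, Real.exp (∑ i ∈ Finset.range n, g (T^[i] z))}

/-- The (Walters) topological pressure of a single map `T` with potential `g`,
for the distance function `ρ`. -/
noncomputable def P0S {Y : Type*} (ρ : Y → Y → ℝ) (T : Y → Y) (g : Y → ℝ) : EReal :=
  ⨆ ε ∈ Set.Ioi (0 : ℝ), atTop.limsup fun n : ℕ =>
    (((n : ℝ)⁻¹ * Real.log (Qn0S ρ T g n ε) : ℝ) : EReal)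

end Skew


section AuxSkewProof

variable {X : Type*}

lemma fw_concat {ι : Type*} (f : ι → X → X) (w : List ι) (a : ι) (x : X) :
    fw f (w ++ [a]) x = f a (fw f w x) := by
  simp [fw, List.foldl_append]

lemma continuous_fw {ι : Type*} [TopologicalSpace X] (f : ι → X → X)
    (hf : ∀ i, Continuous (f i)) (w : List ι) : Continuous (fw f w) := by
  induction w with
  | nil => exact continuous_id
  | cons a w ih =>
    have h : fw f (a :: w) = fun x => fw f w (f a x) := rfl
    rw [h]; exact ih.comp (hf a)

lemma take_ofFn_eq {α : Type*} {n i : ℕ} (h : i ≤ n) (g : Fin n → α) :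
    (List.ofFn g).take i = List.ofFn (fun j : Fin i => g ⟨j, lt_of_lt_of_le j.2 h⟩) := by
  apply List.ext_getElem
  · simp [h]
  · intro j h1 h2
    simp [List.getElem_take]

lemma skew_iter {m : ℕ} (f : Fin m → X → X) (p : (ℤ → Fin m) × X) (i : ℕ) :
    (skew f)^[i] p =
      ((fun k => p.1 (k + i)), fw f (List.ofFn fun j : Fin i => p.1 ((j : ℕ) : ℤ)) p.2) := by
  induction i with
  | zero =>
    simp only [Function.iterate_zero, id_eq, List.ofFn_zero]
    refine Prod.ext ?_ ?_
    · funext k; simp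
    · rfl
  | succ i ih =>
    rw [Function.iterate_succ_apply', ih]
    refine Prod.ext ?_ ?_
    · funext k
      show p.1 (k + 1 + i) = p.1 (k + (i + 1 : ℕ))
      congr 1
      push_cast
      ring
    · show f (p.1 ((0 : ℤ) + i)) (fw f (List.ofFn fun j : Fin i => p.1 ((j : ℕ) : ℤ)) p.2) = _
      rw [List.ofFn_succ']
      rw [List.concat_eq_append, fw_concat]
      simp [Fin.coe_castSucc, Fin.val_last]

lemma dSigma_lt_of_agree {m N : ℕ} {ε : ℝ} (hN : (1 / 2 : ℝ) ^ N < ε) (hε : 0 < ε)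
    (ω ω' : ℤ → Fin m) (h : ∀ k : ℤ, k.natAbs ≤ N → ω k = ω' k) :
    dSigma m ω ω' < ε := by
  unfold dSigma
  split_ifs with he
  · exact hε
  · have hSne : {k : ℕ | ∃ n : ℤ, n.natAbs = k ∧ ω n ≠ ω' n}.Nonempty := by
      by_contra hc
      rw [Set.not_nonempty_iff_eq_empty] at hc
      apply he
      funext k
      by_contra hk
      have : k.natAbs ∈ {k : ℕ | ∃ n : ℤ, n.natAbs = k ∧ ω n ≠ ω' n} := ⟨k, rfl, hk⟩
      simp [hc] at this
    obtain ⟨n0, hn0, hne⟩ := Nat.sInf_mem hSne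
    have hNlt : N < sInf {k : ℕ | ∃ n : ℤ, n.natAbs = k ∧ ω n ≠ ω' n} := by
      by_contra h'
      push_neg at h'
      exact hne (h n0 (by omega))
    calc (1 / 2 : ℝ) ^ sInf {k : ℕ | ∃ n : ℤ, n.natAbs = k ∧ ω n ≠ ω' n}
        ≤ (1 / 2 : ℝ) ^ N := by
          apply pow_le_pow_of_le_one (by norm_num) (by norm_num) hNlt.le
      _ < ε := hN

end AuxSkewProof
section AuxSkewProof2

variable {X : Type*} [MetricSpace X] [CompactSpace X]

/-- Representative sequence for a word on the window `[-N, n+N)`. -/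
def encA (m n N : ℕ) (hm : 0 < m) (v : Fin (n + 2 * N) → Fin m) : ℤ → Fin m :=
  fun k =>
    if h : 0 ≤ k + N ∧ k + N < n + 2 * N then
      v ⟨(k + N).toNat, by omega⟩
    else ⟨0, hm⟩

/-- The middle word of length `n`. -/
def wvA (m n N : ℕ) (v : Fin (n + 2 * N) → Fin m) : Fin n → Fin m :=
  fun i => v ⟨(i : ℕ) + N, by omega⟩

lemma encA_win {m n N : ℕ} (hm : 0 < m) (v : Fin (n + 2 * N) → Fin m) (k : ℤ)
    (h1 : -(N : ℤ) ≤ k) (h2 : k < n + N) :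
    encA m n N hm v k = v ⟨(k + N).toNat, by omega⟩ := by
  rw [encA, dif_pos (by omega)]

lemma encA_restrictFin {m n N : ℕ} (hm : 0 < m) (ω : ℤ → Fin m) (j : Fin (n + 2 * N)) :
    encA m n N hm (fun j' : Fin (n + 2 * N) => ω ((j' : ℤ) - N)) ((j : ℤ) - N) = ω ((j : ℤ) - N) := by
  rw [encA_win hm _ _ (by omega) (by omega)]
  show ω ((((j : ℤ) - N + N).toNat : ℤ) - N) = ω ((j : ℤ) - N)
  congr 1
  omega

lemma encA_inj {m n N : ℕ} (hm : 0 < m) : Function.Injective (encA m n N hm) := by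
  intro v v' h
  funext j
  have h1 := congrFun h ((j : ℤ) - N)
  rw [encA_win hm v _ (by omega) (by omega), encA_win hm v' _ (by omega) (by omega)] at h1
  have hj : (⟨((j : ℤ) - N + N).toNat, by omega⟩ : Fin (n + 2 * N)) = j := by
    ext; simp only; omega
  rwa [hj] at h1

lemma encA_restrict {m n N : ℕ} (hm : 0 < m) (ω : ℤ → Fin m) (k : ℤ)
    (h1 : -(N : ℤ) ≤ k) (h2 : k < n + N) :
    encA m n N hm (fun j' : Fin (n + 2 * N) => ω ((j' : ℤ) - N)) k = ω k := by
  rw [encA_win hm _ _ h1 h2]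
  show ω (((k + N).toNat : ℤ) - N) = ω k
  congr 1
  omega

lemma encA_mid {m n N : ℕ} (hm : 0 < m) (v : Fin (n + 2 * N) → Fin m) (j : ℕ) (hj : j < n) :
    encA m n N hm v ((j : ℕ) : ℤ) = wvA m n N v ⟨j, hj⟩ := by
  rw [encA_win hm _ _ (by omega) (by omega), wvA]
  refine congrArg v (Fin.ext ?_)
  show ((j : ℤ) + N).toNat = j + N
  omega

/-- Existence of finite full-Bowen spanning sets by compactness. -/
lemma exists_fullspan {m : ℕ} (f : Fin m → X → X) (hf : ∀ i, Continuous (f i))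
    {ε : ℝ} (hε : 0 < ε) (w : List (Fin m)) :
    ∃ F : Finset X, ∀ x : X, ∃ y ∈ F, ∀ i < w.length,
      dist (fw f (w.take i) x) (fw f (w.take i) y) < ε := by
  set U : X → Set X := fun y =>
    {x | ∀ i ∈ Finset.range w.length,
      dist (fw f (w.take i) x) (fw f (w.take i) y) < ε} with hU
  have hopen : ∀ y, IsOpen (U y) := by
    intro y
    have : U y = ⋂ i ∈ Finset.range w.length,
        {x | dist (fw f (w.take i) x) (fw f (w.take i) y) < ε} := by
      ext x; simp [hU]
    rw [this]
    refine isOpen_biInter_finset fun i _ => ?_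
    exact isOpen_lt (((continuous_fw f hf (w.take i)).dist continuous_const)) continuous_const
  have hcover : (Set.univ : Set X) ⊆ ⋃ y, U y := by
    intro x _
    exact Set.mem_iUnion.2 ⟨x, fun i _ => by simp [hε]⟩
  obtain ⟨t, ht⟩ := isCompact_univ.elim_finite_subcover U hopen hcover
  refine ⟨t, fun x => ?_⟩
  obtain ⟨y, hy1, hy2⟩ := Set.mem_iUnion₂.1 (ht (Set.mem_univ x))
  exact ⟨y, hy1, fun i hi => hy2 i (Finset.mem_range.2 hi)⟩

end AuxSkewProof2
section AuxSkewProof3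

def rhoA (m n N : ℕ) (v : Fin (n + 2 * N) → Fin m) :
    (Fin n → Fin m) × (Fin (2 * N) → Fin m) :=
  (wvA m n N v, fun k =>
    if (k : ℕ) < N then v ⟨(k : ℕ), by omega⟩ else v ⟨(k : ℕ) + n, by omega⟩)

lemma rhoA_inj (m n N : ℕ) : Function.Injective (rhoA m n N) := by
  intro v v' h
  have h1 : wvA m n N v = wvA m n N v' := congrArg Prod.fst h
  have h2 : (fun k : Fin (2 * N) =>
      if (k : ℕ) < N then v ⟨(k : ℕ), by omega⟩ else v ⟨(k : ℕ) + n, by omega⟩)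
      = (fun k : Fin (2 * N) =>
      if (k : ℕ) < N then v' ⟨(k : ℕ), by omega⟩ else v' ⟨(k : ℕ) + n, by omega⟩) :=
    congrArg Prod.snd h
  funext j
  have hvj : ∀ (u : Fin (n + 2 * N) → Fin m) (a : ℕ) (ha : a < n + 2 * N),
      a = (j : ℕ) → u ⟨a, ha⟩ = u j := by
    intro u a ha hh
    congr 1
    exact Fin.ext hh
  rcases lt_or_ge (j : ℕ) N with hj | hj
  · have hk : (if ((j : ℕ)) < N then v ⟨(j : ℕ), by omega⟩ else v ⟨(j : ℕ) + n, by omega⟩)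
        = (if ((j : ℕ)) < N then v' ⟨(j : ℕ), by omega⟩ else v' ⟨(j : ℕ) + n, by omega⟩) :=
      congrFun h2 ⟨(j : ℕ), by omega⟩
    rw [if_pos hj, if_pos hj] at hk
    exact (hvj v _ _ rfl).symm.trans (hk.trans (hvj v' _ _ rfl))
  rcases lt_or_ge (j : ℕ) (N + n) with hj2 | hj2
  · have hk : v ⟨((j : ℕ) - N) + N, by omega⟩ = v' ⟨((j : ℕ) - N) + N, by omega⟩ :=
      congrFun h1 ⟨(j : ℕ) - N, by omega⟩
    exact (hvj v _ _ (by omega)).symm.trans (hk.trans (hvj v' _ _ (by omega)))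
  · have hk : (if ((j : ℕ) - n) < N then v ⟨(j : ℕ) - n, by omega⟩
          else v ⟨((j : ℕ) - n) + n, by omega⟩)
        = (if ((j : ℕ) - n) < N then v' ⟨(j : ℕ) - n, by omega⟩
          else v' ⟨((j : ℕ) - n) + n, by omega⟩) :=
      congrFun h2 ⟨(j : ℕ) - n, by omega⟩
    rw [if_neg (by omega), if_neg (by omega)] at hk
    exact (hvj v _ _ (by omega)).symm.trans (hk.trans (hvj v' _ _ (by omega)))

lemma count_aux {m n N : ℕ} (t : (Fin n → Fin m) → ℝ) (ht : ∀ w, 0 ≤ t w) :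
    ∑ v : Fin (n + 2 * N) → Fin m, t (wvA m n N v)
      ≤ (m : ℝ) ^ (2 * N) * ∑ w : Fin n → Fin m, t w := by
  have h1 : ∑ v : Fin (n + 2 * N) → Fin m, t (wvA m n N v)
      = ∑ q ∈ Finset.univ.image (rhoA m n N), t q.1 := by
    rw [Finset.sum_image (fun a _ b _ h => rhoA_inj m n N h)]
    rfl
  rw [h1]
  have h2 : ∑ q ∈ Finset.univ.image (rhoA m n N), t q.1
      ≤ ∑ q : (Fin n → Fin m) × (Fin (2 * N) → Fin m), t q.1 :=
    Finset.sum_le_sum_of_subset_of_nonneg (Finset.subset_univ _) (fun q _ _ => ht q.1)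
  refine h2.trans (le_of_eq ?_)
  rw [Fintype.sum_prod_type]
  simp only [Finset.sum_const, Finset.card_univ, Fintype.card_fun, Fintype.card_fin,
    nsmul_eq_mul]
  rw [← Finset.mul_sum]
  push_cast
  ring

end AuxSkewProof3
theorem skew_product_Qn_bound
    {X : Type*} [MetricSpace X] [CompactSpace X] {m : ℕ}
    (f : Fin m → X → X) (hf : ∀ i, Continuous (f i))
    (φ : X → ℝ) (hφ : Continuous φ) :
    ∀ ε r : ℝ, 0 < ε → 0 < r → r < 1 →
      ∃ K : ℝ, 0 < K ∧ ∀ n : ℕ, 1 ≤ n →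
        QnS (Dmet m) (skew f) (gPot φ) n ε r ≤
          K * (m : ℝ) ^ n * Qn f φ n ε r := by
  classical
  intro ε r hε hr0 hr1
  rcases Nat.eq_zero_or_pos m with hm0 | hm
  · -- degenerate case `m = 0`
    subst hm0
    refine ⟨1, one_pos, fun n hn => ?_⟩
    haveI : IsEmpty (ℤ → Fin 0) := ⟨fun g => (g 0).elim0⟩
    have hset : {s : ℝ | ∃ F : Finset ((ℤ → Fin 0) × X),
        rSpanS (Dmet 0) (skew f) n ε r F ∧
        s = ∑ z ∈ F, Real.exp (∑ i ∈ Finset.range n, gPot φ ((skew f)^[i] z))} = {0} := by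
      ext s
      constructor
      · rintro ⟨F, _, rfl⟩
        have hF : F = ∅ := Finset.eq_empty_of_isEmpty F
        simp [hF]
      · rintro rfl
        exact ⟨∅, fun y => (IsEmpty.false y.1).elim, by simp⟩
    have h1 : QnS (Dmet 0) (skew f) (gPot φ) n ε r = 0 := by
      rw [QnS, hset]
      exact csInf_singleton 0
    have h2 : ((0 : ℕ) : ℝ) ^ n = 0 := by
      rw [Nat.cast_zero]
      exact zero_pow (by omega)
    rw [h1, h2]
    simp
  · -- main case `0 < m`
    obtain ⟨N, hN⟩ := exists_pow_lt_of_lt_one hε (show (1 / 2 : ℝ) < 1 by norm_num)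
    have hmR : (0 : ℝ) < (m : ℝ) := by exact_mod_cast hm
    refine ⟨(m : ℝ) ^ (2 * N), pow_pos hmR _, fun n hn => ?_⟩
    have hK : (0 : ℝ) < (m : ℝ) ^ (2 * N) := pow_pos hmR _
    have hmn : (0 : ℝ) < (m : ℝ) ^ n := pow_pos hmR n
    -- the sets defining `Qw` are nonempty
    have hne : ∀ w : Fin n → Fin m,
        {s : ℝ | ∃ F : Finset X, rSpan f (List.ofFn w) ε r F ∧
          s = ∑ x ∈ F, Real.exp (Sw f φ (List.ofFn w) x)}.Nonempty := by
      intro w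
      obtain ⟨F, hF⟩ := exists_fullspan f hf hε (List.ofFn w)
      refine ⟨_, F, ?_, rfl⟩
      intro x
      obtain ⟨y, hy, hdy⟩ := hF x
      refine ⟨y, hy, ?_⟩
      have hfil : (Finset.range (List.ofFn w).length).filter
          (fun i => dist (fw f ((List.ofFn w).take i) x) (fw f ((List.ofFn w).take i) y) < ε)
          = Finset.range (List.ofFn w).length := by
        apply Finset.filter_true_of_mem
        intro i hi
        exact hdy i (Finset.mem_range.1 hi)
      rw [hfil]
      simp only [List.length_ofFn, Finset.card_range]
      have hn' : (0 : ℝ) < n := by exact_mod_cast hn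
      nlinarith
    -- rewrite the right-hand side
    have hQnrw : (m : ℝ) ^ (2 * N) * (m : ℝ) ^ n * Qn f φ n ε r
        = (m : ℝ) ^ (2 * N) * ∑ w : Fin n → Fin m, Qw f φ (List.ofFn w) ε r := by
      rw [Qn, Fintype.card_fin]
      field_simp
    rw [hQnrw]
    refine le_of_forall_pos_le_add fun δ hδ => ?_
    set δ₀ := δ / ((m : ℝ) ^ (2 * N) * (m : ℝ) ^ n) with hδ₀def
    have hδ₀ : 0 < δ₀ := div_pos hδ (mul_pos hK hmn)
    have hchoose : ∀ w : Fin n → Fin m, ∃ F : Finset X,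
        rSpan f (List.ofFn w) ε r F ∧
        ∑ x ∈ F, Real.exp (Sw f φ (List.ofFn w) x) < Qw f φ (List.ofFn w) ε r + δ₀ := by
      intro w
      obtain ⟨s, hs, hlt⟩ := Real.lt_sInf_add_pos (hne w) hδ₀
      obtain ⟨F, hF, rfl⟩ := hs
      exact ⟨F, hF, hlt⟩
    choose F hFspan hFlt using hchoose
    -- the spanning set for the skew product
    set G : Finset ((ℤ → Fin m) × X) :=
      (Finset.univ.sigma fun v : Fin (n + 2 * N) → Fin m => F (wvA m n N v)).image
        (fun p => (encA m n N hm p.1, p.2)) with hG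
    have hGspan : rSpanS (Dmet m) (skew f) n ε r G := by
      rintro ⟨ω, x⟩
      set v : Fin (n + 2 * N) → Fin m := fun j => ω ((j : ℤ) - N) with hv
      have hwω : ∀ i : Fin n, wvA m n N v i = ω ((i : ℕ) : ℤ) := by
        intro i
        show ω ((((i : ℕ) + N : ℕ) : ℤ) - N) = ω ((i : ℕ) : ℤ)
        congr 1
        push_cast
        ring
      obtain ⟨y₀, hy₀, hy₀card⟩ := hFspan (wvA m n N v) x
      refine ⟨(encA m n N hm v, y₀), ?_, ?_⟩
      · rw [hG]
        exact Finset.mem_image.2 ⟨⟨v, y₀⟩,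
          Finset.mem_sigma.2 ⟨Finset.mem_univ _, hy₀⟩, rfl⟩
      · rw [List.length_ofFn] at hy₀card
        refine lt_of_lt_of_le hy₀card ?_
        have hsub : (Finset.range n).filter
            (fun i => dist (fw f ((List.ofFn (wvA m n N v)).take i) x)
              (fw f ((List.ofFn (wvA m n N v)).take i) y₀) < ε)
            ⊆ (Finset.range n).filter
            (fun i => Dmet m ((skew f)^[i] (ω, x)) ((skew f)^[i] (encA m n N hm v, y₀)) < ε) := by
          intro i hi
          rw [Finset.mem_filter] at hi ⊢
          obtain ⟨hirange, hidist⟩ := hi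
          have hin : i < n := Finset.mem_range.1 hirange
          refine ⟨hirange, ?_⟩
          rw [skew_iter, skew_iter]
          simp only [Dmet]
          apply max_lt
          · apply dSigma_lt_of_agree hN hε
            intro k hk
            show ω (k + i) = encA m n N hm v (k + i)
            rw [hv]
            exact (encA_restrict hm ω (k + i) (by omega) (by omega)).symm
          · have hword1 : (List.ofFn fun j : Fin i => ω ((j : ℕ) : ℤ))
                = (List.ofFn (wvA m n N v)).take i := by
              rw [take_ofFn_eq hin.le]
              congr 1
              funext j
              exact (hwω ⟨(j : ℕ), lt_of_lt_of_le j.2 hin.le⟩).symm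
            have hword2 : (List.ofFn fun j : Fin i => encA m n N hm v ((j : ℕ) : ℤ))
                = (List.ofFn (wvA m n N v)).take i := by
              rw [take_ofFn_eq hin.le]
              congr 1
              funext j
              exact encA_mid hm v (j : ℕ) (lt_of_lt_of_le j.2 hin.le)
            show dist (fw f (List.ofFn fun j : Fin i => ω ((j : ℕ) : ℤ)) x)
              (fw f (List.ofFn fun j : Fin i => encA m n N hm v ((j : ℕ) : ℤ)) y₀) < ε
            rw [hword1, hword2]
            exact hidist
        exact_mod_cast Finset.card_le_card hsub
    -- the value of the sum over `G`
    have hbdd : BddBelow {s : ℝ | ∃ F' : Finset ((ℤ → Fin m) × X),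
        rSpanS (Dmet m) (skew f) n ε r F' ∧
        s = ∑ z ∈ F', Real.exp (∑ i ∈ Finset.range n, gPot φ ((skew f)^[i] z))} := by
      refine ⟨0, ?_⟩
      rintro s ⟨F', _, rfl⟩
      exact Finset.sum_nonneg fun z _ => (Real.exp_pos _).le
    have hQle : QnS (Dmet m) (skew f) (gPot φ) n ε r ≤
        ∑ z ∈ G, Real.exp (∑ i ∈ Finset.range n, gPot φ ((skew f)^[i] z)) :=
      csInf_le hbdd ⟨G, hGspan, rfl⟩
    have hinj : ∀ p ∈ (Finset.univ.sigma fun v : Fin (n + 2 * N) → Fin m => F (wvA m n N v)),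
        ∀ q ∈ (Finset.univ.sigma fun v : Fin (n + 2 * N) → Fin m => F (wvA m n N v)),
        (encA m n N hm p.1, p.2) = (encA m n N hm q.1, q.2) → p = q := by
      rintro ⟨v, y⟩ _ ⟨v', y'⟩ _ h
      rw [Prod.mk.injEq] at h
      obtain ⟨h1, h2⟩ := h
      have hv : v = v' := encA_inj hm h1
      subst hv
      subst h2
      rfl
    have hsumG : ∑ z ∈ G, Real.exp (∑ i ∈ Finset.range n, gPot φ ((skew f)^[i] z))
        = ∑ v : Fin (n + 2 * N) → Fin m,
            ∑ y ∈ F (wvA m n N v), Real.exp (Sw f φ (List.ofFn (wvA m n N v)) y) := by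
      rw [hG, Finset.sum_image hinj, Finset.sum_sigma]
      refine Finset.sum_congr rfl fun v _ => ?_
      refine Finset.sum_congr rfl fun y _ => ?_
      congr 1
      rw [Sw, List.length_ofFn]
      refine Finset.sum_congr rfl fun i hi => ?_
      have hin : i < n := Finset.mem_range.1 hi
      rw [skew_iter]
      show φ (fw f (List.ofFn fun j : Fin i => encA m n N hm v ((j : ℕ) : ℤ)) y) = _
      have hword : (List.ofFn fun j : Fin i => encA m n N hm v ((j : ℕ) : ℤ))
          = (List.ofFn (wvA m n N v)).take i := by
        rw [take_ofFn_eq hin.le]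
        congr 1
        funext j
        exact encA_mid hm v (j : ℕ) (lt_of_lt_of_le j.2 hin.le)
      rw [hword]
    have htn : ∀ w : Fin n → Fin m,
        0 ≤ ∑ y ∈ F w, Real.exp (Sw f φ (List.ofFn w) y) :=
      fun w => Finset.sum_nonneg fun y _ => (Real.exp_pos _).le
    calc QnS (Dmet m) (skew f) (gPot φ) n ε r
        ≤ ∑ z ∈ G, Real.exp (∑ i ∈ Finset.range n, gPot φ ((skew f)^[i] z)) := hQle
      _ = ∑ v : Fin (n + 2 * N) → Fin m,
            ∑ y ∈ F (wvA m n N v), Real.exp (Sw f φ (List.ofFn (wvA m n N v)) y) := hsumG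
      _ ≤ (m : ℝ) ^ (2 * N) * ∑ w : Fin n → Fin m,
            ∑ y ∈ F w, Real.exp (Sw f φ (List.ofFn w) y) :=
          count_aux (fun w => ∑ y ∈ F w, Real.exp (Sw f φ (List.ofFn w) y)) htn
      _ ≤ (m : ℝ) ^ (2 * N) * ∑ w : Fin n → Fin m, (Qw f φ (List.ofFn w) ε r + δ₀) := by
          apply mul_le_mul_of_nonneg_left _ hK.le
          exact Finset.sum_le_sum fun w _ => (hFlt w).le
      _ = (m : ℝ) ^ (2 * N) * ∑ w : Fin n → Fin m, Qw f φ (List.ofFn w) ε r + δ := by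
          rw [Finset.sum_add_distrib, Finset.sum_const, Finset.card_univ, mul_add]
          congr 1
          simp only [nsmul_eq_mul, Fintype.card_fun, Fintype.card_fin]
          rw [hδ₀def]
          push_cast
          field_simp
end

section
/- Let f_0,...,f_{m-1} be homeomorphisms of a compact metric space (X,d), φ continuous, F^{-1} the inverse skew product on Σ_m×X, g(ω,x)=φ(x). Then for any n≥1 and 0<ε≤1/2, Q_n^s(F^{-1},g,ε) ≥ m^n · Q_n^s(f_0^{-1},...,f_{m-1}^{-1},φ,ε). -/
open Filter Topology

section AuxProof

open Finset

lemma fw_cons' {X ι : Type*} (f : ι → X → X) (a : ι) (l : List ι) (x : X) :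
    fw f (a :: l) x = fw f l (f a x) := rfl

lemma ofFn_take' {α : Type*} {n : ℕ} (σ : Fin n → α) {i : ℕ} (h : i ≤ n) :
    (List.ofFn σ).take i = List.ofFn (fun j : Fin i => σ (Fin.castLE h j)) := by
  apply List.ext_getElem
  · simp [h]
  · intro k h1 h2
    simp [List.getElem_take, Fin.castLE]

lemma skewInv_iterate {X : Type*} [TopologicalSpace X] {m : ℕ} (f : Fin m → X ≃ₜ X)
    (i : ℕ) (ω : ℤ → Fin m) (x : X) :
    (skewInv f)^[i] (ω, x) = (fun k => ω (k - i),
      fw (fun a => ⇑(f a).symm) (List.ofFn (fun j : Fin i => ω (-(j : ℤ) - 1))) x) := by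
  induction i generalizing ω x with
  | zero => simp [fw]
  | succ i ih =>
    rw [Function.iterate_succ_apply]
    show (skewInv f)^[i] (fun n => ω (n-1), (f (ω (-1))).symm x) = _
    rw [ih, Prod.mk.injEq]
    constructor
    · funext k; congr 1; push_cast; ring
    · conv_rhs => rw [List.ofFn_succ, fw_cons']
      congr 1
      congr 1
      funext j
      congr 1
      simp [Fin.val_succ]
      ring

lemma dSigma_nonneg' {m : ℕ} (ω ω' : ℤ → Fin m) : 0 ≤ dSigma m ω ω' := by
  unfold dSigma; split
  · exact le_refl 0
  · positivity

lemma dSigma_eq_one' {m : ℕ} {ω ω' : ℤ → Fin m} (h : ω 0 ≠ ω' 0) : dSigma m ω ω' = 1 := by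
  have hne : ω ≠ ω' := fun he => h (congrFun he 0)
  unfold dSigma
  rw [if_neg hne]
  have : sInf {k : ℕ | ∃ n : ℤ, n.natAbs = k ∧ ω n ≠ ω' n} = 0 :=
    Nat.sInf_eq_zero.mpr (Or.inl ⟨0, rfl, h⟩)
  rw [this, pow_zero]

lemma dSigma_le' {m : ℕ} {ω ω' : ℤ → Fin m} {K : ℕ}
    (h : ∀ t : ℤ, t.natAbs ≤ K → ω t = ω' t) : dSigma m ω ω' ≤ (1/2 : ℝ) ^ (K + 1) := by
  unfold dSigma; split
  · positivity
  · rename_i hne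
    have hS : {k : ℕ | ∃ n : ℤ, n.natAbs = k ∧ ω n ≠ ω' n}.Nonempty := by
      have : ∃ t : ℤ, ω t ≠ ω' t := by
        by_contra hc; push_neg at hc; exact hne (funext hc)
      obtain ⟨t, ht⟩ := this
      exact ⟨t.natAbs, t, rfl, ht⟩
    have hinf : K + 1 ≤ sInf {k : ℕ | ∃ n : ℤ, n.natAbs = k ∧ ω n ≠ ω' n} := by
      apply le_csInf hS
      rintro k ⟨t, rfl, ht⟩
      by_contra hk
      exact ht (h t (by omega))
    exact pow_le_pow_of_le_one (by norm_num) (by norm_num) hinf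

noncomputable def omg {m : ℕ} (n : ℕ) (hn : 1 ≤ n) (σ : Fin n → Fin m) : ℤ → Fin m :=
  fun k => if h : k < 0 ∧ (-(k+1)).toNat < n then σ ⟨(-(k+1)).toNat, h.2⟩
    else σ ⟨n-1, by omega⟩

lemma omg_neg {m n : ℕ} (hn : 1 ≤ n) (σ : Fin n → Fin m) (j : ℕ) (hj : j < n) :
    omg n hn σ (-(j:ℤ)-1) = σ ⟨j, hj⟩ := by
  unfold omg
  rw [dif_pos]
  · congr 1; apply Fin.ext; simp
  · constructor
    · omega
    · simp; omega

lemma omg_zero {m n : ℕ} (hn : 1 ≤ n) (σ : Fin n → Fin m) :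
    omg n hn σ 0 = σ ⟨n-1, by omega⟩ := by
  unfold omg
  rw [dif_neg]
  simp

lemma omg_word {m n : ℕ} (hn : 1 ≤ n) (σ : Fin n → Fin m) {i : ℕ} (hi : i ≤ n) :
    List.ofFn (fun j : Fin i => omg n hn σ (-(j : ℤ) - 1)) = (List.ofFn σ).take i := by
  rw [ofFn_take' σ hi]
  congr 1
  funext j
  rw [omg_neg hn σ j (lt_of_lt_of_le j.isLt hi)]
  rfl

lemma fw_continuous {X : Type*} [TopologicalSpace X] {m : ℕ} (f : Fin m → X ≃ₜ X)
    (l : List (Fin m)) : Continuous (fw (fun a => ⇑(f a).symm) l) := by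
  induction l with
  | nil => exact continuous_id
  | cons a l ih =>
    have : fw (fun a => ⇑(f a).symm) (a :: l) =
        (fun x => fw (fun a => ⇑(f a).symm) l ((f a).symm x)) := rfl
    rw [this]
    exact ih.comp (f a).symm.continuous

/-- The key boundedness lemma: the set of sums over `(n,ε)`-separated sets for the
inverse skew product is bounded above. -/
lemma bddAbove_T {X : Type*} [MetricSpace X] [CompactSpace X] {m : ℕ}
    (f : Fin m → X ≃ₜ X) (φ : X → ℝ) (hφ : Continuous φ)
    (n : ℕ) (hn : 1 ≤ n) (ε : ℝ) (hε : 0 < ε) :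
    BddAbove {s : ℝ | ∃ E : Finset ((ℤ → Fin m) × X), sep0S (Dmet m) (skewInv f) n ε E ∧
      s = ∑ z ∈ E, Real.exp (∑ i ∈ Finset.range n, gPot φ ((skewInv f)^[i] z))} := by
  classical
  set finv : Fin m → X → X := fun a => ⇑(f a).symm with hfinv
  -- a bound on φ
  obtain ⟨M, hM0⟩ := (isCompact_univ.image hφ).bddAbove
  have hM : ∀ x : X, φ x ≤ M := fun x => hM0 ⟨x, Set.mem_univ x, rfl⟩
  -- the symbolic window
  obtain ⟨L, hL⟩ := exists_pow_lt_of_lt_one hε (by norm_num : (1/2 : ℝ) < 1)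
  set K : ℕ := n + L with hK
  -- uniform continuity data
  set Λ := Σ i : Fin n, (Fin (i : ℕ) → Fin m) with hΛ
  have hΛne : Nonempty Λ := ⟨⟨⟨0, hn⟩, Fin.elim0⟩⟩
  have H : ∀ lam : Λ, ∃ δ > 0, ∀ x y : X, dist x y < δ →
      dist (fw finv (List.ofFn lam.2) x) (fw finv (List.ofFn lam.2) y) ≤ ε := by
    intro lam
    have uc := CompactSpace.uniformContinuous_of_continuous (fw_continuous f (List.ofFn lam.2))
    obtain ⟨δ, hδ0, hδ⟩ := Metric.uniformContinuous_iff.mp uc ε hε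
    exact ⟨δ, hδ0, fun x y h => le_of_lt (hδ h)⟩
  choose δf hδpos hδ using H
  set δ : ℝ := Finset.univ.inf' (Finset.univ_nonempty) δf with hδdef
  have hδ0 : 0 < δ := by
    rw [hδdef, Finset.lt_inf'_iff]
    exact fun lam _ => hδpos lam
  -- finite cover of X
  have hcov : (Set.univ : Set X) ⊆ ⋃ x : X, Metric.ball x (δ/2) := by
    intro x _
    exact Set.mem_iUnion.mpr ⟨x, Metric.mem_ball_self (by linarith)⟩
  obtain ⟨t, ht⟩ := isCompact_univ.elim_finite_subcover (fun x : X => Metric.ball x (δ/2))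
    (fun x => Metric.isOpen_ball) hcov
  have hc : ∀ x : X, ∃ y, y ∈ t ∧ x ∈ Metric.ball y (δ/2) := by
    intro x
    have := ht (Set.mem_univ x)
    simpa using this
  choose c2 hc2t hc2b using hc
  -- the coding map
  set Wty := (↥(Finset.Icc (-(K:ℤ)) (K:ℤ)) → Fin m) with hWty
  set c : (ℤ → Fin m) × X → Wty × X := fun p => (fun k => p.1 k.val, c2 p.2) with hc_def
  set N : ℕ := ((Finset.univ : Finset Wty) ×ˢ t).card with hN
  refine ⟨(N : ℝ) * Real.exp (n * M), ?_⟩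
  rintro s ⟨E, hsep, rfl⟩
  -- cardinality bound
  have hcard : E.card ≤ N := by
    apply Finset.card_le_card_of_injOn c
    · intro p _
      exact Finset.mem_product.mpr ⟨Finset.mem_univ _, hc2t p.2⟩
    · intro p hp q hq hpq
      by_contra hne
      obtain ⟨i, hi, hgt⟩ := hsep p hp q hq hne
      obtain ⟨ω, x⟩ := p
      obtain ⟨ω', y⟩ := q
      have hc1 : (fun k : ↥(Finset.Icc (-(K:ℤ)) (K:ℤ)) => ω k.val) =
          (fun k : ↥(Finset.Icc (-(K:ℤ)) (K:ℤ)) => ω' k.val) := congrArg Prod.fst hpq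
      have hc2' : c2 x = c2 y := congrArg Prod.snd hpq
      have hwin : ∀ u : ℤ, u.natAbs ≤ K → ω u = ω' u := by
        intro u hu
        have humem : u ∈ Finset.Icc (-(K:ℤ)) (K:ℤ) := by
          rw [Finset.mem_Icc]; omega
        exact congrFun hc1 ⟨u, humem⟩
      have hxy : dist x y < δ := by
        have h1 := hc2b x
        have h2 := hc2b y
        rw [hc2'] at h1
        rw [Metric.mem_ball] at h1 h2
        calc dist x y ≤ dist x (c2 y) + dist y (c2 y) := dist_triangle_right x y (c2 y)
          _ < δ/2 + δ/2 := add_lt_add h1 h2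
          _ = δ := by ring
      -- compute the iterate and bound Dmet
      rw [skewInv_iterate, skewInv_iterate] at hgt
      have hwords : (List.ofFn (fun j : Fin i => ω (-(j : ℤ) - 1))) =
          (List.ofFn (fun j : Fin i => ω' (-(j : ℤ) - 1))) := by
        congr 1
        funext j
        apply hwin
        have : (j : ℕ) < i := j.isLt
        omega
      have hdle : Dmet m (fun k => ω (k - i), fw finv (List.ofFn (fun j : Fin i => ω (-(j:ℤ)-1))) x)
          (fun k => ω' (k - i), fw finv (List.ofFn (fun j : Fin i => ω' (-(j:ℤ)-1))) y) ≤ ε := by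
        apply max_le
        · -- symbolic part
          have hagree : ∀ u : ℤ, u.natAbs ≤ L →
              (fun k => ω (k - i)) u = (fun k => ω' (k - i)) u := by
            intro u hu
            apply hwin
            have : i < n := hi
            omega
          calc dSigma m (fun k => ω (k - i)) (fun k => ω' (k - i)) ≤ (1/2:ℝ)^(L+1) :=
                dSigma_le' hagree
            _ ≤ (1/2:ℝ)^L := by
                apply pow_le_pow_of_le_one (by norm_num) (by norm_num); omega
            _ ≤ ε := le_of_lt hL
        · -- metric part
          rw [← hwords]
          set lam : Λ := ⟨⟨i, hi⟩, fun j => ω (-(j : ℤ) - 1)⟩ with hlam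
          have := hδ lam x y (lt_of_lt_of_le hxy (Finset.inf'_le δf (Finset.mem_univ lam)))
          exact this
      exact absurd (lt_of_lt_of_le hgt hdle) (lt_irrefl ε)
  -- sum bound
  have hterm : ∀ z ∈ E, Real.exp (∑ i ∈ Finset.range n, gPot φ ((skewInv f)^[i] z)) ≤
      Real.exp (n * M) := by
    intro z _
    apply Real.exp_le_exp.mpr
    calc ∑ i ∈ Finset.range n, gPot φ ((skewInv f)^[i] z) ≤
        ∑ _i ∈ Finset.range n, M := Finset.sum_le_sum (fun i _ => hM _)
      _ = n * M := by rw [Finset.sum_const, Finset.card_range, nsmul_eq_mul]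
  calc ∑ z ∈ E, Real.exp (∑ i ∈ Finset.range n, gPot φ ((skewInv f)^[i] z)) ≤
      ∑ _z ∈ E, Real.exp (n * M) := Finset.sum_le_sum hterm
    _ = (E.card : ℝ) * Real.exp (n * M) := by rw [Finset.sum_const, nsmul_eq_mul]
    _ ≤ (N : ℝ) * Real.exp (n * M) := by
        apply mul_le_mul_of_nonneg_right _ (Real.exp_nonneg _)
        exact_mod_cast hcard

end AuxProof

theorem inverse_skew_Qns_bound
    {X : Type*} [MetricSpace X] [CompactSpace X] {m : ℕ}
    (f : Fin m → X ≃ₜ X) (φ : X → ℝ) (hφ : Continuous φ) :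
    ∀ n : ℕ, 1 ≤ n → ∀ ε : ℝ, 0 < ε → ε ≤ 1 / 2 →
      (m : ℝ) ^ n * Qns0 (fun i => ⇑(f i).symm) φ n ε ≤
        Qns0S (Dmet m) (skewInv f) (gPot φ) n ε := by
  classical
  intro n hn ε hε hε2
  set finv : Fin m → X → X := (fun i => ⇑(f i).symm) with hfinv
  set T : Set ℝ := {s : ℝ | ∃ E : Finset ((ℤ → Fin m) × X), sep0S (Dmet m) (skewInv f) n ε E ∧
      s = ∑ z ∈ E, Real.exp (∑ i ∈ Finset.range n, gPot φ ((skewInv f)^[i] z))} with hT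
  have hRHS : Qns0S (Dmet m) (skewInv f) (gPot φ) n ε = sSup T := rfl
  rw [hRHS]
  by_cases hm : m = 0
  · subst hm
    have h1 : Qns0 finv φ n ε = 0 := by
      rw [Qns0]
      have : (Fintype.card (Fin 0) : ℝ) = 0 := by simp
      rw [this, zero_pow (by omega), div_zero, zero_mul]
    rw [h1, mul_zero]
    apply Real.sSup_nonneg
    rintro s ⟨E, _, rfl⟩
    exact Finset.sum_nonneg (fun z _ => le_of_lt (Real.exp_pos _))
  · have hm1 : 1 ≤ m := Nat.one_le_iff_ne_zero.mpr hm
    have hmn : (0:ℝ) < (m:ℝ)^n := by positivity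
    set S : (Fin n → Fin m) → Set ℝ := fun σ =>
      {s : ℝ | ∃ E : Finset X, sep0 finv (List.ofFn σ) ε E ∧
        s = ∑ x ∈ E, Real.exp (Sw finv φ (List.ofFn σ) x)} with hS
    have hQws : ∀ σ : Fin n → Fin m, Qws0 finv φ (List.ofFn σ) ε = sSup (S σ) := fun σ => rfl
    have hLHS : (m:ℝ)^n * Qns0 finv φ n ε = ∑ σ : Fin n → Fin m, sSup (S σ) := by
      rw [Qns0, Fintype.card_fin]
      field_simp
      exact Finset.sum_congr rfl (fun σ _ => hQws σ)
    rw [hLHS]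
    -- basic facts
    have h0 : ∀ σ : Fin n → Fin m, (0:ℝ) ∈ S σ := by
      intro σ
      exact ⟨∅, fun x hx => absurd hx (Finset.notMem_empty x), by simp⟩
    have hbdd : BddAbove T := bddAbove_T f φ hφ n hn ε hε
    -- the combination step
    have hcomb : ∀ s : (Fin n → Fin m) → ℝ, (∀ σ, s σ ∈ S σ) →
        (∑ σ : Fin n → Fin m, s σ) ∈ T := by
      intro s hs
      choose E hEsep hEsum using hs
      set bigE : Finset ((ℤ → Fin m) × X) :=
        Finset.univ.biUnion (fun σ : Fin n → Fin m =>
          (E σ).image (fun x => (omg n hn σ, x))) with hbigE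
      have homg_inj : ∀ σ τ : Fin n → Fin m, σ ≠ τ → omg n hn σ ≠ omg n hn τ := by
        intro σ τ hστ heq
        obtain ⟨j, hj⟩ := Function.ne_iff.mp hστ
        apply hj
        have h1 := omg_neg hn σ (j : ℕ) j.isLt
        have h2 := omg_neg hn τ (j : ℕ) j.isLt
        rw [heq] at h1
        rw [h1] at h2
        simpa using h2
      have hdisj : ((Finset.univ : Finset (Fin n → Fin m)) : Set (Fin n → Fin m)).PairwiseDisjoint
          (fun σ : Fin n → Fin m => (E σ).image (fun x => (omg n hn σ, x))) := by
        intro σ _ τ _ hστ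
        simp only [Function.onFun]
        rw [Finset.disjoint_left]
        intro p hpσ hpτ
        obtain ⟨x, _, hx⟩ := Finset.mem_image.mp hpσ
        obtain ⟨y, _, hy⟩ := Finset.mem_image.mp hpτ
        apply homg_inj σ τ hστ
        rw [← hx] at hy
        exact (congrArg Prod.fst hy).symm
      have hmem : ∀ p ∈ bigE, ∃ σ : Fin n → Fin m, ∃ x ∈ E σ, p = (omg n hn σ, x) := by
        intro p hp
        obtain ⟨σ, _, hp2⟩ := Finset.mem_biUnion.mp hp
        obtain ⟨x, hx, hpx⟩ := Finset.mem_image.mp hp2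
        exact ⟨σ, x, hx, hpx.symm⟩
      -- Birkhoff sums agree
      have hbirk : ∀ (σ : Fin n → Fin m) (x : X),
          (∑ i ∈ Finset.range n, gPot φ ((skewInv f)^[i] (omg n hn σ, x))) =
            Sw finv φ (List.ofFn σ) x := by
        intro σ x
        rw [Sw, List.length_ofFn]
        apply Finset.sum_congr rfl
        intro i hi
        rw [Finset.mem_range] at hi
        rw [skewInv_iterate, gPot]
        simp only
        rw [omg_word hn σ (le_of_lt hi)]
      refine ⟨bigE, ?_, ?_⟩
      · -- separation
        intro p hp q hq hpq
        obtain ⟨σ, x, hxE, rfl⟩ := hmem p hp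
        obtain ⟨τ, y, hyE, rfl⟩ := hmem q hq
        by_cases hστ : σ = τ
        · subst hστ
          have hxy : x ≠ y := fun h => hpq (by rw [h])
          obtain ⟨i, hi, hd⟩ := hEsep σ x hxE y hyE hxy
          rw [List.length_ofFn] at hi
          refine ⟨i, hi, ?_⟩
          rw [skewInv_iterate, skewInv_iterate]
          apply lt_of_lt_of_le _ (le_max_right _ _)
          rw [omg_word hn σ (le_of_lt hi)]
          exact hd
        · obtain ⟨j, hj⟩ := Function.ne_iff.mp hστ
          by_cases hjn : (j : ℕ) + 1 < n
          · refine ⟨(j : ℕ) + 1, hjn, ?_⟩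
            rw [skewInv_iterate, skewInv_iterate]
            apply lt_of_lt_of_le _ (le_max_left _ _)
            have hne0 : (fun k => omg n hn σ (k - ((j:ℕ)+1 : ℕ))) 0 ≠
                (fun k => omg n hn τ (k - ((j:ℕ)+1 : ℕ))) 0 := by
              simp only
              have he : (0 : ℤ) - ((j:ℕ)+1 : ℕ) = -((j:ℕ) : ℤ) - 1 := by push_cast; ring
              rw [he, omg_neg hn σ (j:ℕ) j.isLt, omg_neg hn τ (j:ℕ) j.isLt]
              simpa using hj
            rw [dSigma_eq_one' hne0]
            linarith
          · have hjval : (j : ℕ) = n - 1 := by have := j.isLt; omega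
            refine ⟨0, by omega, ?_⟩
            simp only [Function.iterate_zero, id_eq]
            apply lt_of_lt_of_le _ (le_max_left _ _)
            have hne0 : omg n hn σ 0 ≠ omg n hn τ 0 := by
              rw [omg_zero hn σ, omg_zero hn τ]
              have hjeq : j = ⟨n-1, by omega⟩ := Fin.ext hjval
              rw [← hjeq]
              exact hj
            rw [dSigma_eq_one' hne0]
            linarith
      · -- sums agree
        rw [Finset.sum_biUnion hdisj]
        apply Finset.sum_congr rfl
        intro σ _
        rw [Finset.sum_image (by intro a _ b _ h; exact (Prod.mk.injEq _ _ _ _).mp h |>.2)]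
        rw [hEsum σ]
        apply Finset.sum_congr rfl
        intro x _
        rw [hbirk σ x]
    -- each S σ is bounded above (it sits inside T)
    have hsub : ∀ σ : Fin n → Fin m, S σ ⊆ T := by
      intro σ a ha
      have := hcomb (fun τ => if τ = σ then a else 0)
        (fun τ => by by_cases h : τ = σ <;> simp [h, ha, h0 τ])
      simpa using this
    have hSbdd : ∀ σ : Fin n → Fin m, BddAbove (S σ) := fun σ => hbdd.mono (hsub σ)
    -- the ε/2 argument
    apply le_of_forall_pos_le_add
    intro δ hδ
    have hne : Nonempty (Fin n → Fin m) := ⟨fun _ => ⟨0, by omega⟩⟩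
    set cI : ℕ := Fintype.card (Fin n → Fin m) with hcI
    have hcIpos : 0 < cI := Fintype.card_pos
    have hex : ∀ σ : Fin n → Fin m, ∃ a ∈ S σ, sSup (S σ) - δ / cI < a := by
      intro σ
      apply exists_lt_of_lt_csSup ⟨0, h0 σ⟩
      have : 0 < δ / cI := by positivity
      linarith
    choose g hg hglt using hex
    calc ∑ σ : Fin n → Fin m, sSup (S σ) ≤ ∑ σ : Fin n → Fin m, (g σ + δ / cI) := by
          apply Finset.sum_le_sum
          intro σ _
          have := hglt σ
          linarith
      _ = (∑ σ : Fin n → Fin m, g σ) + δ := by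
          rw [Finset.sum_add_distrib, Finset.sum_const, nsmul_eq_mul, Finset.card_univ, ← hcI]
          congr 1
          field_simp
      _ ≤ sSup T + δ := by
          have := le_csSup hbdd (hcomb g hg)
          linarith
end
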